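/- Let E be a real normed vector space with norm ‖·‖_w, and let ‖·‖_s : E → ℝ be a second norm on E (nonnegative, subadditive, and invariant under negation). Let δ₀ ∈ (0,1), let R : (0,1) → [0,∞), and for each δ ∈ [0,δ₀) let T_δ : E → E be a map with T₀ linear, and let μ_δ ∈ E satisfy T_δ μ_δ = μ_δ. Let ℓ : E → ℝ be a linear functional with ℓ(μ_δ) = 1 for all δ ∈ [0,δ₀). Assume: (P1) there is C > 0 such that ‖T₀ μ_δ − T_δ μ_δ‖_w ≤ C·R(δ) for all δ ∈ (0,δ₀); (P2) there is M > 0 such that ‖μ_δ‖_s ≤ M for all δ ∈ [0,δ₀); (P3) there are 0 < ρ₂ < 1 and C₂ > 0 such that ‖T₀ⁿ μ‖_w ≤ ρ₂ⁿ C₂ ‖μ‖_s for every n ≥ 1 and every μ ∈ E with ℓ(μ) = 0; (P4) there is M₂ > 0 such that ‖T₀ⁿ g‖_w ≤ M₂ ‖g‖_w for all g ∈ E and n ≥ 1. Assume moreover that δ ≤ R(δ) for all δ ∈ (0,δ₀). Then there exist D₁ > 0 and δ₁ ∈ (0,δ₀) such that for all δ ∈ (0,δ₁), ‖μ_δ −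 μ₀‖_w ≤ D₁ · R(δ) · |log δ|. -/

import Mathlib

lemma iter_map_sub' {E : Type*} [AddCommGroup E] [Module ℝ E]
    {T : E → E} (h : IsLinearMap ℝ T) (n : ℕ) (a b : E) :
    T^[n] (a - b) = T^[n] a - T^[n] b := by
  induction n with
  | zero => simp
  | succ n ih => simp only [Function.iterate_succ_apply', ih, h.map_sub]

lemma iter_telescope' {E : Type*} [AddCommGroup E] [Module ℝ E]
    {T : E → E} (h : IsLinearMap ℝ T) (n : ℕ) (x : E) :
    x - T^[n] x = ∑ k ∈ Finset.range n, T^[k] (x - T x) := by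
  induction n with
  | zero => simp
  | succ n ih =>
    rw [Finset.sum_range_succ, ← ih, iter_map_sub' h, ← Function.iterate_succ_apply]
    abel

/-- Quantitative stability for fixed points of an `R(δ)`-family of operators:
under (P1)–(P4), with strong norm `s` (nonnegative, subadditive, symmetric),
fixed points `μ_δ` of unit mass `ℓ(μ_δ) = 1`, and `δ ≤ R(δ)`, there are `D₁ > 0`
and `δ₁ ∈ (0, δ₀)` such that `‖μ_δ − μ₀‖_w ≤ D₁ R(δ) |log δ|` for all `δ ∈ (0, δ₁)`. -/
theorem quantitative_stability_fixed_points
    {E : Type*} [NormedAddCommGroup E] [NormedSpace ℝ E]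
    (s : E → ℝ)
    (hs_nonneg : ∀ x, 0 ≤ s x)
    (hs_add : ∀ x y, s (x + y) ≤ s x + s y)
    (hs_neg : ∀ x, s (-x) = s x)
    (δ₀ : ℝ) (hδ₀ : 0 < δ₀ ∧ δ₀ < 1)
    (R : ℝ → ℝ) (hR_nonneg : ∀ δ, 0 < δ → δ < 1 → 0 ≤ R δ)
    (T : ℝ → E → E) (hT₀lin : IsLinearMap ℝ (T 0))
    (μ : ℝ → E)
    (hfix : ∀ δ, 0 ≤ δ → δ < δ₀ → T δ (μ δ) = μ δ)
    (ℓ : E →ₗ[ℝ] ℝ)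
    (hmass : ∀ δ, 0 ≤ δ → δ < δ₀ → ℓ (μ δ) = 1)
    (C : ℝ) (hC : 0 < C)
    (hP1 : ∀ δ, 0 < δ → δ < δ₀ → ‖T 0 (μ δ) - T δ (μ δ)‖ ≤ C * R δ)
    (M : ℝ) (hM : 0 < M)
    (hP2 : ∀ δ, 0 ≤ δ → δ < δ₀ → s (μ δ) ≤ M)
    (ρ₂ C₂ : ℝ) (hρ₂0 : 0 < ρ₂) (hρ₂1 : ρ₂ < 1) (hC₂ : 0 < C₂)
    (hP3 : ∀ n : ℕ, 1 ≤ n → ∀ ν : E, ℓ ν = 0 → ‖(T 0)^[n] ν‖ ≤ ρ₂ ^ n * C₂ * s ν)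
    (M₂ : ℝ) (hM₂ : 0 < M₂)
    (hP4 : ∀ n : ℕ, 1 ≤ n → ∀ g : E, ‖(T 0)^[n] g‖ ≤ M₂ * ‖g‖)
    (hδR : ∀ δ, 0 < δ → δ < δ₀ → δ ≤ R δ) :
    ∃ D₁ : ℝ, 0 < D₁ ∧ ∃ δ₁ : ℝ, 0 < δ₁ ∧ δ₁ < δ₀ ∧
      ∀ δ, 0 < δ → δ < δ₁ → ‖μ δ - μ 0‖ ≤ D₁ * R δ * |Real.log δ| := by
  have hlogρ : Real.log ρ₂ < 0 := Real.log_neg hρ₂0 hρ₂1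
  set L : ℝ := -Real.log ρ₂ with hL
  have hLpos : 0 < L := by simpa [hL] using neg_pos.mpr hlogρ
  set K : ℝ := max M₂ 1 with hK
  have hKpos : (0:ℝ) < K := lt_of_lt_of_le one_pos (le_max_right _ _)
  have hm1 : min δ₀ (min ρ₂ (Real.exp (-1))) ≤ δ₀ := min_le_left _ _
  have hm2 : min δ₀ (min ρ₂ (Real.exp (-1))) ≤ ρ₂ :=
    le_trans (min_le_right _ _) (min_le_left _ _)
  have hm3 : min δ₀ (min ρ₂ (Real.exp (-1))) ≤ Real.exp (-1) :=
    le_trans (min_le_right _ _) (min_le_right _ _)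
  have hmpos : 0 < min δ₀ (min ρ₂ (Real.exp (-1))) := by
    apply lt_min hδ₀.1; exact lt_min hρ₂0 (Real.exp_pos _)
  refine ⟨2 * M * C₂ + (1 / L + 1) * K * C, by positivity,
    min δ₀ (min ρ₂ (Real.exp (-1))) / 2, by positivity, by linarith [hδ₀.1], ?_⟩
  intro δ hδpos hδlt
  have hδδ₀ : δ < δ₀ := by linarith
  have hδρ : δ < ρ₂ := by linarith
  have hδe : δ ≤ Real.exp (-1) := by linarith [Real.exp_pos (-1 : ℝ)]
  have hδ1 : δ < 1 := lt_trans hδδ₀ hδ₀.2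
  have hlogδ : Real.log δ ≤ -1 := by
    calc Real.log δ ≤ Real.log (Real.exp (-1)) := Real.log_le_log hδpos hδe
      _ = -1 := Real.log_exp _
  have habsδ : 1 ≤ |Real.log δ| := by rw [abs_of_nonpos (by linarith)]; linarith
  have habs_eq : |Real.log δ| = -Real.log δ := abs_of_nonpos (by linarith)
  -- choose n
  set r : ℝ := Real.log δ / Real.log ρ₂ with hr
  have hrpos : 0 < r := div_pos_iff.mpr (Or.inr ⟨by linarith, hlogρ⟩)
  set n : ℕ := ⌈r⌉₊ with hn
  have hn1 : 1 ≤ n := Nat.one_le_iff_ne_zero.mpr (by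
    intro h; rw [hn] at h; exact absurd (Nat.ceil_eq_zero.mp h) (not_le.mpr hrpos))
  have hrle : r ≤ (n : ℝ) := Nat.le_ceil r
  have hρn : ρ₂ ^ n ≤ δ := by
    have h1 : (n : ℝ) * Real.log ρ₂ ≤ r * Real.log ρ₂ :=
      mul_le_mul_of_nonpos_right hrle (le_of_lt hlogρ)
    have h2 : r * Real.log ρ₂ = Real.log δ := div_mul_cancel₀ _ (ne_of_lt hlogρ)
    have h3 : Real.log (ρ₂ ^ n) ≤ Real.log δ := by
      rw [Real.log_pow]; linarith
    calc ρ₂ ^ n = Real.exp (Real.log (ρ₂ ^ n)) := (Real.exp_log (pow_pos hρ₂0 n)).symm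
      _ ≤ Real.exp (Real.log δ) := Real.exp_le_exp.mpr h3
      _ = δ := Real.exp_log hδpos
  have hnle : (n : ℝ) ≤ (1 / L + 1) * |Real.log δ| := by
    have h1 : (n : ℝ) ≤ r + 1 := le_of_lt (Nat.ceil_lt_add_one (le_of_lt hrpos))
    have hreq : r = |Real.log δ| / L := by
      rw [hr, habs_eq, hL, neg_div_neg_eq]
    calc (n : ℝ) ≤ r + 1 := h1
      _ = |Real.log δ| / L + 1 := by rw [hreq]
      _ ≤ |Real.log δ| / L + |Real.log δ| := by linarith
      _ = (1 / L + 1) * |Real.log δ| := by field_simp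
  -- fixed point facts
  have hfix0 : T 0 (μ 0) = μ 0 := hfix 0 le_rfl hδ₀.1
  have hiter0 : ∀ m : ℕ, (T 0)^[m] (μ 0) = μ 0 := fun m =>
    Function.iterate_fixed hfix0 m
  have hmassd : ℓ (μ δ - μ 0) = 0 := by
    rw [map_sub, hmass δ (le_of_lt hδpos) hδδ₀, hmass 0 le_rfl hδ₀.1, sub_self]
  have hs2M : s (μ δ - μ 0) ≤ 2 * M := by
    have := hs_add (μ δ) (-(μ 0))
    rw [hs_neg] at this
    have h2 := hP2 δ (le_of_lt hδpos) hδδ₀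
    have h3 := hP2 0 le_rfl hδ₀.1
    rw [sub_eq_add_neg]
    linarith
  -- term 1
  have hterm1 : ‖(T 0)^[n] (μ δ - μ 0)‖ ≤ 2 * M * C₂ * δ := by
    have := hP3 n hn1 (μ δ - μ 0) hmassd
    calc ‖(T 0)^[n] (μ δ - μ 0)‖ ≤ ρ₂ ^ n * C₂ * s (μ δ - μ 0) := this
      _ ≤ δ * C₂ * (2 * M) := by
          apply mul_le_mul (by apply mul_le_mul_of_nonneg_right hρn (le_of_lt hC₂))
            hs2M (hs_nonneg _)
          positivity
      _ = 2 * M * C₂ * δ := by ring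
  -- term 2
  have hg : ‖μ δ - T 0 (μ δ)‖ ≤ C * R δ := by
    have h := hP1 δ hδpos hδδ₀
    rw [hfix δ (le_of_lt hδpos) hδδ₀] at h
    rw [norm_sub_rev]; exact h
  have hiterK : ∀ k : ℕ, ‖(T 0)^[k] (μ δ - T 0 (μ δ))‖ ≤ K * (C * R δ) := by
    intro k
    have hCR : 0 ≤ C * R δ := mul_nonneg (le_of_lt hC) (hR_nonneg δ hδpos hδ1)
    rcases Nat.eq_zero_or_pos k with hk | hk
    · subst hk
      simp only [Function.iterate_zero, id_eq]
      calc ‖μ δ - T 0 (μ δ)‖ ≤ C * R δ := hg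
        _ ≤ K * (C * R δ) := le_mul_of_one_le_left hCR (le_max_right _ _)
    · calc ‖(T 0)^[k] (μ δ - T 0 (μ δ))‖ ≤ M₂ * ‖μ δ - T 0 (μ δ)‖ := hP4 k hk _
        _ ≤ K * (C * R δ) :=
          mul_le_mul (le_max_left _ _) hg (norm_nonneg _) (le_of_lt hKpos)
  have hterm2 : ‖μ δ - (T 0)^[n] (μ δ)‖ ≤ (n : ℝ) * (K * (C * R δ)) := by
    rw [iter_telescope' hT₀lin n (μ δ)]
    calc ‖∑ k ∈ Finset.range n, (T 0)^[k] (μ δ - T 0 (μ δ))‖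
        ≤ ∑ k ∈ Finset.range n, ‖(T 0)^[k] (μ δ - T 0 (μ δ))‖ := norm_sum_le _ _
      _ ≤ ∑ _k ∈ Finset.range n, K * (C * R δ) :=
          Finset.sum_le_sum (fun k _ => hiterK k)
      _ = (n : ℝ) * (K * (C * R δ)) := by
          rw [Finset.sum_const, Finset.card_range, nsmul_eq_mul]
  -- combine
  have hsplit : μ δ - μ 0 = (T 0)^[n] (μ δ - μ 0) + (μ δ - (T 0)^[n] (μ δ)) := by
    rw [iter_map_sub' hT₀lin, hiter0 n]; abel
  have hRδ : δ ≤ R δ := hδR δ hδpos hδδ₀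
  have hRnn : 0 ≤ R δ := hR_nonneg δ hδpos hδ1
  calc ‖μ δ - μ 0‖
      = ‖(T 0)^[n] (μ δ - μ 0) + (μ δ - (T 0)^[n] (μ δ))‖ := by rw [← hsplit]
    _ ≤ ‖(T 0)^[n] (μ δ - μ 0)‖ + ‖μ δ - (T 0)^[n] (μ δ)‖ := norm_add_le _ _
    _ ≤ 2 * M * C₂ * δ + (n : ℝ) * (K * (C * R δ)) := add_le_add hterm1 hterm2
    _ ≤ 2 * M * C₂ * (R δ * |Real.log δ|) +
        ((1 / L + 1) * |Real.log δ|) * (K * (C * R δ)) := by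
        apply add_le_add
        · apply mul_le_mul_of_nonneg_left _ (by positivity)
          calc δ ≤ R δ := hRδ
            _ = R δ * 1 := (mul_one _).symm
            _ ≤ R δ * |Real.log δ| := by
                apply mul_le_mul_of_nonneg_left habsδ hRnn
        · apply mul_le_mul_of_nonneg_right hnle (by positivity)
    _ = (2 * M * C₂ + (1 / L + 1) * K * C) * R δ * |Real.log δ| := by ring
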